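/- The integral R := ∫₀^1 dx/(1 − x³)^{2/3} equals √3 · ∫₁^∞ dy/√(4y³ − 1). -/

import Mathlib

open Real Set MeasureTheory

namespace Rsub

noncomputable def c (x : ℝ) : ℝ := (1 - x^3) ^ ((1:ℝ)/3)
noncomputable def f (x : ℝ) : ℝ := x / (1 - c x)
noncomputable def f' (x : ℝ) : ℝ := -((1 + c x) / ((1 - c x) * (c x)^2))

lemma base_pos {x : ℝ} (hx : x ∈ Ioo (0:ℝ) 1) : 0 < 1 - x^3 := by
  have := pow_lt_one₀ hx.1.le hx.2 (by norm_num : 3 ≠ 0)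
  linarith

lemma c_pos {x : ℝ} (hx : x ∈ Ioo (0:ℝ) 1) : 0 < c x :=
  Real.rpow_pos_of_pos (base_pos hx) _

lemma c_lt_one {x : ℝ} (hx : x ∈ Ioo (0:ℝ) 1) : c x < 1 := by
  have h1 : 1 - x^3 < 1 := by have := pow_pos hx.1 3; linarith
  have := Real.rpow_lt_one (le_of_lt (base_pos hx)) h1 (by norm_num : (0:ℝ) < 1/3)
  simpa [c] using this

lemma c_cube {x : ℝ} (hx : x ∈ Ioo (0:ℝ) 1) : (c x)^3 = 1 - x^3 := by
  rw [c, ← Real.rpow_natCast ((1 - x^3) ^ ((1:ℝ)/3)) 3, ← Real.rpow_mul (base_pos hx).le]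
  norm_num

lemma x_add_c {x : ℝ} (hx : x ∈ Ioo (0:ℝ) 1) : 1 < x + c x := by
  have h3 := c_cube hx
  have h1 := c_pos hx
  have h2 := c_lt_one hx
  nlinarith [hx.1, hx.2, mul_pos hx.1 (sub_pos.2 hx.2), sq_nonneg (c x - (1 - x)),
    sq_nonneg (c x + (1 - x)), mul_pos h1 (sub_pos.2 hx.2)]

lemma c_sq {x : ℝ} (hx : x ∈ Ioo (0:ℝ) 1) : (c x)^2 = (1 - x^3) ^ ((2:ℝ)/3) := by
  rw [c, ← Real.rpow_natCast ((1 - x^3) ^ ((1:ℝ)/3)) 2, ← Real.rpow_mul (base_pos hx).le]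
  norm_num

lemma hasDerivAt_c {x : ℝ} (hx : x ∈ Ioo (0:ℝ) 1) :
    HasDerivAt c (-(x^2) * ((c x)^2)⁻¹) x := by
  have hb : HasDerivAt (fun x : ℝ => 1 - x^3) (-(3 * x^2)) x := by
    simpa using ((hasDerivAt_pow 3 x).const_sub 1)
  have h := hb.rpow_const (p := (1:ℝ)/3) (Or.inl (ne_of_gt (base_pos hx)))
  have heq : -(3 * x^2) * ((1:ℝ)/3) * (1 - x^3) ^ ((1:ℝ)/3 - 1)
      = -(x^2) * ((c x)^2)⁻¹ := by
    have : (1 - x^3) ^ ((1:ℝ)/3 - 1) = ((1 - x^3) ^ ((2:ℝ)/3))⁻¹ := by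
      rw [← Real.rpow_neg (base_pos hx).le]; norm_num
    rw [this, ← c_sq hx]; ring
  rw [heq] at h
  exact h

lemma hasDerivAt_f {x : ℝ} (hx : x ∈ Ioo (0:ℝ) 1) : HasDerivAt f (f' x) x := by
  have hc := hasDerivAt_c hx
  have hden : HasDerivAt (fun x : ℝ => 1 - c x) (-(-(x^2) * ((c x)^2)⁻¹)) x :=
    hc.const_sub 1
  have hd_ne : 1 - c x ≠ 0 := by
    have := c_lt_one hx; linarith
  have h := (hasDerivAt_id x).div hden hd_ne
  have heq : (1 * (1 - c x) - x * -(-(x^2) * ((c x)^2)⁻¹)) / (1 - c x)^2 = f' x := by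
    have h3 := c_cube hx
    have h1 := c_pos hx
    have h2 := c_lt_one hx
    rw [f']
    field_simp
    linear_combination (-1) * h3
  simp only [id_eq] at h
  rw [heq] at h
  exact h

lemma f'_neg {x : ℝ} (hx : x ∈ Ioo (0:ℝ) 1) : f' x < 0 := by
  have h1 := c_pos hx
  have h2 := c_lt_one hx
  have h0 : (0:ℝ) < 1 - c x := by linarith
  have : 0 < (1 + c x) / ((1 - c x) * (c x)^2) := by
    apply div_pos (by linarith)
    positivity
  rw [f']; linarith

lemma strictAnti_f : StrictAntiOn f (Ioo (0:ℝ) 1) := by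
  apply strictAntiOn_of_deriv_neg (convex_Ioo 0 1)
  · intro x hx
    exact (hasDerivAt_f hx).continuousAt.continuousWithinAt
  · intro x hx
    rw [interior_Ioo] at hx
    rw [(hasDerivAt_f hx).deriv]
    exact f'_neg hx

lemma f_gt_one {x : ℝ} (hx : x ∈ Ioo (0:ℝ) 1) : 1 < f x := by
  have h2 := c_lt_one hx
  have hd : 0 < 1 - c x := by linarith
  rw [f, lt_div_iff₀ hd]
  have := x_add_c hx
  linarith

lemma image_f : f '' Ioo (0:ℝ) 1 = Ioi (1:ℝ) := by
  apply Set.eq_of_subset_of_subset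
  · rintro _ ⟨x, hx, rfl⟩
    exact f_gt_one hx
  · intro z hz
    rw [mem_Ioi] at hz
    set t := Real.sqrt ((4 * z^3 - 1) / 3) with ht_def
    have hz3 : 1 < z^3 := by nlinarith [sq_nonneg z, sq_nonneg (z-1), sq_nonneg (z+1)]
    have harg : 1 < (4 * z^3 - 1) / 3 := by linarith
    have ht2 : t^2 = (4 * z^3 - 1) / 3 := Real.sq_sqrt (by linarith)
    have ht1 : 1 < t := by
      nlinarith [Real.sqrt_nonneg ((4 * z^3 - 1) / 3), ht2]
    obtain ⟨c₀, hc₀_def⟩ : ∃ a : ℝ, a = (t - 1) / (t + 1) := ⟨_, rfl⟩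
    have hc₀_pos : 0 < c₀ := hc₀_def ▸ div_pos (by linarith) (by linarith)
    have hc₀_lt : c₀ < 1 := by
      rw [hc₀_def, div_lt_one (by linarith)]; linarith
    obtain ⟨x₀, hx₀_def⟩ : ∃ a : ℝ, a = (1 - c₀^3) ^ ((1:ℝ)/3) := ⟨_, rfl⟩
    have hb₀ : 0 < 1 - c₀^3 := by
      have := pow_lt_one₀ hc₀_pos.le hc₀_lt (by norm_num : 3 ≠ 0); linarith
    have hb₀' : 1 - c₀^3 < 1 := by have := pow_pos hc₀_pos 3; linarith
    have hx₀_pos : 0 < x₀ := hx₀_def ▸ Real.rpow_pos_of_pos hb₀ _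
    have hx₀_lt : x₀ < 1 := by
      have := Real.rpow_lt_one hb₀.le hb₀' (by norm_num : (0:ℝ) < 1/3)
      rw [hx₀_def]; simpa using this
    have hx₀_mem : x₀ ∈ Ioo (0:ℝ) 1 := ⟨hx₀_pos, hx₀_lt⟩
    have hx₀_cube : x₀^3 = 1 - c₀^3 := by
      rw [hx₀_def, ← Real.rpow_natCast ((1 - c₀^3) ^ ((1:ℝ)/3)) 3,
        ← Real.rpow_mul hb₀.le]
      norm_num
    have hcx₀ : c x₀ = c₀ := by
      rw [c, hx₀_cube, show 1 - (1 - c₀^3) = c₀^3 by ring,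
        ← Real.rpow_natCast c₀ 3, ← Real.rpow_mul hc₀_pos.le]
      norm_num
    refine ⟨x₀, hx₀_mem, ?_⟩
    have hfx : f x₀ = x₀ / (1 - c₀) := by rw [f, hcx₀]
    have ht_eq : t * (1 - c₀) = 1 + c₀ := by
      rw [hc₀_def]; field_simp; ring
    have hcube : (f x₀)^3 = z^3 := by
      rw [hfx, div_pow, hx₀_cube]
      have hd : (1 - c₀)^3 ≠ 0 := by
        have : (0:ℝ) < 1 - c₀ := by linarith
        positivity
      rw [div_eq_iff hd]
      have hz3' : z^3 = (3 * t^2 + 1) / 4 := by rw [ht2]; ring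
      rw [hz3']
      have ht2' : t^2 * (1 - c₀)^2 = (1 + c₀)^2 := by
        linear_combination (t * (1 - c₀) + (1 + c₀)) * ht_eq
      linear_combination (-3 * (1 - c₀) / 4) * ht2'
    exact (Odd.strictMono_pow (R := ℝ) (by decide : Odd 3)).injective hcube

lemma pointwise {x : ℝ} (hx : x ∈ Ioo (0:ℝ) 1) :
    Real.sqrt 3 • (|f' x| • (1 / Real.sqrt (4 * (f x)^3 - 1))) = 1 / (1 - x^3) ^ ((2:ℝ)/3) := by
  have h1 := c_pos hx
  have h2 := c_lt_one hx
  have h3 := c_cube hx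
  have hd : (0:ℝ) < 1 - c x := by linarith
  have habs : |f' x| = (1 + c x) / ((1 - c x) * (c x)^2) := by
    rw [f', abs_neg, abs_of_pos]
    exact div_pos (by linarith) (by positivity)
  have hfx3 : 4 * (f x)^3 - 1 = 3 * ((1 + c x)/(1 - c x))^2 := by
    rw [f]
    field_simp
    linear_combination 4 * h3
  have hsqrt : Real.sqrt (4 * (f x)^3 - 1) = Real.sqrt 3 * ((1 + c x)/(1 - c x)) := by
    rw [hfx3, Real.sqrt_mul (by norm_num), Real.sqrt_sq (by positivity)]
  have hs3 : Real.sqrt 3 ≠ 0 := by positivity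
  rw [smul_eq_mul, smul_eq_mul, habs, hsqrt, ← c_sq hx]
  have hc0 : c x ≠ 0 := ne_of_gt h1
  have hc1 : (1:ℝ) + c x ≠ 0 := by linarith
  field_simp

end Rsub

theorem R_second_form :
    ∫ x in (0:ℝ)..1, 1 / (1 - x^3) ^ ((2:ℝ)/3)
      = Real.sqrt 3 * ∫ y in Set.Ioi (1:ℝ), 1 / Real.sqrt (4 * y^3 - 1) := by
  have key := MeasureTheory.integral_image_eq_integral_abs_deriv_smul measurableSet_Ioo
      (fun x hx => (Rsub.hasDerivAt_f hx).hasDerivWithinAt)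
      Rsub.strictAnti_f.injOn (fun y => 1 / Real.sqrt (4 * y^3 - 1))
  rw [Rsub.image_f] at key
  rw [intervalIntegral.integral_of_le zero_le_one, MeasureTheory.integral_Ioc_eq_integral_Ioo,
    key, ← smul_eq_mul, ← MeasureTheory.integral_smul]
  refine (MeasureTheory.setIntegral_congr_fun measurableSet_Ioo ?_).symm
  intro x hx
  exact Rsub.pointwise hx
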